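/- A function of the form X_n(t) = a_n/(t - t_0) (for t > t_0) is a componentwise solution of the dyadic model if and only if the sequence (a_n) satisfies a_0 = 0 and a_n a_{n+1} = 2^{-n} a_n + a_{n-1}^2 / 2 for all n ≥ 1. -/

import Mathlib

/-- A componentwise solution of the unforced dyadic model on the open interval
`(t₀, ∞)`. -/
def IsDyadicSolOn (X : ℕ → ℝ → ℝ) (t₀ : ℝ) : Prop :=
  (∀ t : ℝ, t₀ < t → X 0 t = 0) ∧
  ∀ n : ℕ, ∀ t : ℝ, t₀ < t →
    HasDerivAt (X (n + 1))
      ((2 : ℝ) ^ n * (X n t) ^ 2 - 2 ^ (n + 1) * X (n + 1) t * X (n + 2) t) t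

lemma key_deriv (c t₀ t : ℝ) (ht : t₀ < t) :
    HasDerivAt (fun s => c / (s - t₀)) (-c / (t - t₀) ^ 2) t := by
  have h : HasDerivAt (fun s => s - t₀) 1 t := (hasDerivAt_id t).sub_const t₀
  have hne : t - t₀ ≠ 0 := by intro h'; linarith [sub_eq_zero.mp h']
  have h2 := (h.inv hne).const_mul c
  have hf : (fun s => c / (s - t₀)) = fun y => c * (y - t₀)⁻¹ := by
    funext s; rw [div_eq_mul_inv]
  rw [hf]
  convert h2 using 1
  rfl
  rfl
  rfl
  ring

/-- `X_n(t) = a_n / (t - t₀)` is a componentwise solution on `(t₀, ∞)` iff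
`a_0 = 0` and `a_n a_{n+1} = 2^{-n} a_n + a_{n-1}² / 2` for all `n ≥ 1`. -/
theorem dyadic_self_similar_characterization (a : ℕ → ℝ) (t₀ : ℝ) :
    IsDyadicSolOn (fun n t => a n / (t - t₀)) t₀ ↔
      (a 0 = 0 ∧ ∀ n : ℕ, 1 ≤ n →
        a n * a (n + 1) = ((2 : ℝ) ^ n)⁻¹ * a n + (a (n - 1)) ^ 2 / 2) := by
  constructor
  · rintro ⟨h0, hode⟩
    have ha0 : a 0 = 0 := by
      have := h0 (t₀ + 1) (by linarith)
      simpa using this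
    refine ⟨ha0, ?_⟩
    intro n hn
    obtain ⟨m, rfl⟩ : ∃ m, n = m + 1 := ⟨n - 1, (Nat.succ_pred_eq_of_pos hn).symm⟩
    have h1 := hode m (t₀ + 1) (by linarith)
    have h2 := key_deriv (a (m + 1)) t₀ (t₀ + 1) (by linarith)
    have heq := h2.unique h1
    simp at heq
    have hp : (2 : ℝ) ^ m ≠ 0 := by positivity
    simp only [Nat.add_sub_cancel]
    field_simp [pow_succ] at heq ⊢
    simp only [pow_succ (2:ℝ) m] at heq ⊢
    nlinarith [heq]
  · rintro ⟨ha0, hrec⟩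
    constructor
    · intro t ht
      simp [ha0]
    · intro n t ht
      have hne : t - t₀ ≠ 0 := by intro h'; linarith [sub_eq_zero.mp h']
      have h := key_deriv (a (n + 1)) t₀ t ht
      convert h using 1
      have hr := hrec (n + 1) (by omega)
      simp only [Nat.add_sub_cancel] at hr
      have hp : (2 : ℝ) ^ n ≠ 0 := by positivity
      field_simp [pow_succ] at hr ⊢
      simp only [pow_succ (2:ℝ) n] at hr ⊢
      nlinarith [hr]
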